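/- arXiv:0706.0633 — 3 statements merged into one kernel-verified Lean document; each statement's English description precedes it below -/
import Mathlib

section
/- Let X be a nonreflexive Banach space. Then there exists a nonempty bounded convex set C ⊆ X ⊕∞ ℝ such that the distance function φ(x) := dist((x,0), C) satisfies: φ(x) > 0 for every x ∈ X, and for every ε > 0 there is a set M_ε ⊆ X with diam M_ε < ε and inf φ(M_ε) = 0. -/
set_option maxHeartbeats 1000000

open Metric Set Finset NormedSpace Pointwise

lemma le_forall_pos {a b : ℝ} (h : ∀ ε > 0, a ≤ b + ε) : a ≤ b := by
  by_contra hc; push_neg at hc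
  have := h ((a - b)/2) (by linarith); linarith

lemma opNorm_le_of_unit {E : Type*} [NormedAddCommGroup E] [NormedSpace ℝ E]
    (f : E →L[ℝ] ℝ) {c : ℝ} (hc : 0 ≤ c) (h : ∀ b : E, ‖b‖ ≤ 1 → ‖f b‖ ≤ c) : ‖f‖ ≤ c := by
  refine f.opNorm_le_bound hc (fun y => ?_)
  rcases eq_or_ne y 0 with rfl | hy
  · simp
  · have hn : (0:ℝ) < ‖y‖ := norm_pos_iff.2 hy
    have h1 : ‖(‖y‖⁻¹ • y : E)‖ ≤ 1 := by
      rw [norm_smul, norm_inv, norm_norm, inv_mul_cancel₀ hn.ne']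
    have h2 := h _ h1
    rw [map_smul, smul_eq_mul, norm_mul, norm_inv, norm_norm] at h2
    calc ‖f y‖ = ‖y‖ * (‖y‖⁻¹ * ‖f y‖) := by field_simp
    _ ≤ ‖y‖ * c := mul_le_mul_of_nonneg_left h2 hn.le
    _ = c * ‖y‖ := mul_comm _ _

lemma pidecomp {ι : Type*} [Fintype ι] [DecidableEq ι] (g : (ι → ℝ) →L[ℝ] ℝ) (v : ι → ℝ) :
    g v = ∑ i, v i * g (Pi.single i (1:ℝ)) := by
  classical
  have hv : v = ∑ i, (v i) • (Pi.single i (1:ℝ) : ι → ℝ) := by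
    funext j
    simp [Finset.sum_apply, Pi.single_apply, mul_ite]
  conv_lhs => rw [hv]
  rw [map_sum]
  simp [map_smul, smul_eq_mul]

/-- Helly's theorem on the existence of almost-norm-preserving solutions to finitely many
linear equations. -/
lemma helly {E : Type*} [NormedAddCommGroup E] [NormedSpace ℝ E]
    {ι : Type*} [Fintype ι] (φ : ι → E →L[ℝ] ℝ) (c : ι → ℝ)
    {M ε : ℝ} (hM : 0 ≤ M) (hε : 0 < ε)
    (H : ∀ a : ι → ℝ, |∑ i, a i * c i| ≤ M * ‖∑ i, a i • φ i‖) :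
    ∃ x : E, ‖x‖ ≤ M + ε ∧ ∀ i, φ i x = c i := by
  classical
  set L : ι → E →ₗ[ℝ] ℝ := fun i => (φ i : E →ₗ[ℝ] ℝ) with hL
  set T : E →ₗ[ℝ] (ι → ℝ) := LinearMap.pi L with hT
  set V : Submodule ℝ (ι → ℝ) := LinearMap.range T with hV
  have hcV : c ∈ V := by
    by_contra hc
    have hVc : IsClosed (V : Set (ι → ℝ)) := V.closed_of_finiteDimensional
    obtain ⟨g, s0, hgV, hgc⟩ := geometric_hahn_banach_closed_point V.convex hVc hc
    have hg0 : ∀ y ∈ V, g y = 0 := by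
      intro y hy
      by_contra hne
      have hall : ∀ t : ℝ, g (t • y) < s0 := fun t => hgV _ (V.smul_mem t hy)
      have h2 := hall ((s0+1)/(g y))
      rw [map_smul, smul_eq_mul, div_mul_cancel₀ _ hne] at h2
      linarith
    have hs0 : 0 < s0 := by simpa using hgV 0 V.zero_mem
    set a : ι → ℝ := fun i => g (Pi.single i (1:ℝ)) with ha
    have hsum : ∑ i, a i • φ i = 0 := by
      ext v
      have h1 : (∑ i, a i • φ i) v = ∑ i, a i * φ i v := by
        simp [ContinuousLinearMap.sum_apply, smul_eq_mul]
      have hTv : T v ∈ V := ⟨v, rfl⟩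
      have h2 := hg0 _ hTv
      rw [pidecomp g (T v)] at h2
      have h3 : ∀ i, (T v) i = φ i v := fun i => rfl
      simp only [h3] at h2
      simp only [h1, ContinuousLinearMap.zero_apply]
      rw [← h2]
      exact Finset.sum_congr rfl fun i _ => mul_comm _ _
    have hc0 : ∑ i, a i * c i = g c := by
      rw [pidecomp g c]
      exact Finset.sum_congr rfl fun i _ => mul_comm _ _
    have hH := H a
    rw [hsum, hc0] at hH
    simp only [norm_zero, mul_zero] at hH
    have : g c = 0 := abs_eq_zero.1 (le_antisymm hH (abs_nonneg _))
    linarith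
  obtain ⟨x₀, hx₀⟩ := hcV
  have hx₀i : ∀ i, φ i x₀ = c i := fun i => congrFun hx₀ i
  by_contra hcon
  push_neg at hcon
  set S : Set E := {y | ∀ i, φ i y = c i} with hS
  have hScon : Convex ℝ S := by
    have heq : S = ⋂ i, {y | φ i y = c i} := by
      ext y; simp [hS, Set.mem_iInter]
    rw [heq]
    exact convex_iInter fun i =>
      convex_hyperplane (IsLinearMap.mk (map_add (φ i)) (map_smul (φ i))) (c i)
  set U : Set E := S + Metric.ball (0:E) (M + ε) with hU
  have hUopen : IsOpen U := Metric.isOpen_ball.add_left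
  have hUconv : Convex ℝ U := hScon.add (convex_ball 0 _)
  have h0U : (0:E) ∉ U := by
    rintro ⟨s, hs, b, hb, h0⟩
    have hsb : s = -b := eq_neg_of_add_eq_zero_left h0
    have : ‖s‖ ≤ M + ε := by
      rw [hsb, norm_neg]
      exact le_of_lt (by simpa using hb)
    obtain ⟨i, hi⟩ := hcon s this
    exact hi (hs i)
  obtain ⟨g, hg⟩ := geometric_hahn_banach_open_point hUconv hUopen h0U
  have hg0 : ∀ y ∈ U, g y < 0 := by intro y hy; simpa using hg y hy
  have hball : (0:E) ∈ Metric.ball (0:E) (M + ε) := Metric.mem_ball_self (by linarith)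
  have hSU : ∀ s ∈ S, s ∈ U := fun s hs => ⟨s, hs, 0, hball, add_zero s⟩
  have hx₀S : x₀ ∈ S := fun i => hx₀i i
  have hgx₀ : g x₀ < 0 := hg0 _ (hSU _ hx₀S)
  set β := -g x₀ with hβdef
  have hβ : 0 < β := by simp [hβdef]; linarith
  have hker : ∀ y, (∀ i, φ i y = 0) → g y = 0 := by
    intro y hy
    by_contra hne
    have hall : ∀ t : ℝ, g x₀ + t * g y < 0 := by
      intro t
      have hmem : x₀ + t • y ∈ S := by
        intro i
        rw [map_add, map_smul, hy i, hx₀i i, smul_eq_mul, mul_zero, add_zero]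
      have := hg0 _ (hSU _ hmem)
      rwa [map_add, map_smul, smul_eq_mul] at this
    have h2 := hall ((1 - g x₀)/(g y))
    rw [div_mul_cancel₀ _ hne] at h2
    linarith
  have hspan : (g : E →ₗ[ℝ] ℝ) ∈ Submodule.span ℝ (Set.range L) := by
    apply mem_span_of_iInf_ker_le_ker (L := L)
    intro y hy
    rw [Submodule.mem_iInf] at hy
    exact LinearMap.mem_ker.2 (hker y fun i => hy i)
  obtain ⟨a, ha⟩ := (Submodule.mem_span_range_iff_exists_fun ℝ).1 hspan
  have hgasum : (∑ i, a i • φ i) = g := by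
    ext v
    have h1 := LinearMap.congr_fun ha v
    simpa [ContinuousLinearMap.sum_apply, smul_eq_mul, LinearMap.sum_apply, hL] using h1
  have hH := H a
  rw [hgasum] at hH
  have hval : ∑ i, a i * c i = g x₀ := by
    have h1 : ∑ i, a i * c i = (∑ i, a i • φ i) x₀ := by
      simp only [ContinuousLinearMap.sum_apply, ContinuousLinearMap.smul_apply, smul_eq_mul]
      exact Finset.sum_congr rfl fun i _ => by rw [hx₀i i]
    rw [h1, hgasum]
  rw [hval, abs_of_neg hgx₀] at hH
  set r := M + ε/2 with hr
  have hrpos : 0 < r := by rw [hr]; linarith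
  have hgb : ‖g‖ ≤ β / r := by
    apply opNorm_le_of_unit _ (by positivity)
    intro b hb
    have hrb : ∀ b' : E, ‖b'‖ ≤ 1 → r • b' ∈ Metric.ball (0:E) (M + ε) := by
      intro b' hb'
      rw [Metric.mem_ball, dist_zero_right, norm_smul, Real.norm_eq_abs, abs_of_pos hrpos]
      calc r * ‖b'‖ ≤ r * 1 := mul_le_mul_of_nonneg_left hb' hrpos.le
      _ = r := mul_one r
      _ < M + ε := by rw [hr]; linarith
    have h1 : g (x₀ + r • b) < 0 := hg0 _ ⟨x₀, hx₀S, r • b, hrb b hb, rfl⟩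
    have h2 : g (x₀ + r • (-b)) < 0 := hg0 _ ⟨x₀, hx₀S, r • (-b), hrb (-b) (by rwa [norm_neg]), rfl⟩
    rw [map_add, map_smul, smul_eq_mul] at h1 h2
    rw [map_neg] at h2
    have hA : g b * r < β := by rw [hβdef]; linarith
    have hB : (-g b) * r < β := by rw [hβdef]; linarith
    rw [Real.norm_eq_abs, abs_le]
    constructor
    · rw [neg_le]
      rw [le_div_iff₀ hrpos]
      exact hB.le
    · rw [le_div_iff₀ hrpos]
      exact hA.le
  have hfin : β ≤ M * (β / r) := le_trans hH (mul_le_mul_of_nonneg_left hgb hM)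
  have hfin2 : β * r ≤ M * β := by
    have h6 := mul_le_mul_of_nonneg_right hfin hrpos.le
    rwa [mul_assoc, div_mul_cancel₀ _ hrpos.ne'] at h6
  rw [hr] at hfin2
  nlinarith [hβ, hε]

/-- A Banach space is reflexive if the canonical embedding into its double dual is
surjective. -/
def ReflexiveSpace (X : Type*) [NormedAddCommGroup X] [NormedSpace ℝ X] : Prop :=
  Function.Surjective (NormedSpace.inclusionInDoubleDual ℝ X)

instance instNormSMulClassDoubleDual (X : Type*) [NormedAddCommGroup X] [NormedSpace ℝ X] :
    NormSMulClass ℝ (StrongDual ℝ (StrongDual ℝ X)) :=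
  @NormedSpace.toNormSMulClass ℝ (StrongDual ℝ X →L[ℝ] ℝ) _ _ _

lemma exists_system {X : Type*} [NormedAddCommGroup X] [NormedSpace ℝ X] [CompleteSpace X]
    (hX : ¬ ReflexiveSpace X) :
    ∃ (θ R : ℝ) (f : ℕ → X →L[ℝ] ℝ) (x : ℕ → X), 0 < θ ∧ 0 ≤ R ∧
      (∀ k, ‖f k‖ ≤ 1) ∧ (∀ n, ‖x n‖ ≤ R) ∧
      (∀ k n, k ≤ n → f k (x n) = θ) ∧ (∀ k n, n < k → f k (x n) = 0) := by
  classical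
  rw [ReflexiveSpace, Function.Surjective] at hX
  push_neg at hX
  obtain ⟨Φ, hΦ⟩ := hX
  set J := NormedSpace.inclusionInDoubleDual ℝ X with hJ
  have hJiso : Isometry J := (NormedSpace.inclusionInDoubleDualLi ℝ (E := X)).isometry
  have hclosed : IsClosed (Set.range J) := hJiso.isClosedEmbedding.isClosed_range
  have hmem : Φ ∉ Set.range J := by rintro ⟨y, rfl⟩; exact hΦ y rfl
  set d := Metric.infDist Φ (Set.range J) with hd
  have hdpos : 0 < d := by
    rw [hd]
    exact ((hclosed.notMem_iff_infDist_pos (⟨J 0, 0, rfl⟩ : (Set.range J).Nonempty)).1 hmem)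
  set θ := d / 2 with hθdef
  have hθ : 0 < θ := by rw [hθdef]; linarith
  set R := ‖Φ‖ + 1 with hR
  have hRpos : 0 ≤ R := by rw [hR]; positivity
  -- the key distance fact
  have hdist : ∀ (v : X →L[ℝ] ℝ →L[ℝ] ℝ), True := fun _ => trivial
  set P : ((X →L[ℝ] ℝ) × X) → Prop := fun p => ‖p.1‖ ≤ 1 ∧ Φ p.1 = θ ∧ ‖p.2‖ ≤ R ∧ p.1 p.2 = θ with hP
  set r : ((X →L[ℝ] ℝ) × X) → ((X →L[ℝ] ℝ) × X) → Prop := fun p q => p.1 q.2 = θ ∧ q.1 p.2 = 0 with hr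
  have key : ∀ s : Finset ((X →L[ℝ] ℝ) × X), (∀ p ∈ s, P p) → ∃ q, P q ∧ ∀ p ∈ s, r p q := by
    intro s hs
    have condg : ∀ a : Option {p // p ∈ s} → ℝ,
        |∑ o, a o * Option.elim o θ (fun _ => (0:ℝ))| ≤
          1/2 * ‖∑ o, a o • Option.elim o Φ (fun i => J i.1.2)‖ := by
      intro a
      have hsum : (∑ o, a o • Option.elim o Φ (fun (i : {p // p ∈ s}) => J i.1.2))
          = a none • Φ + J (∑ i : {p // p ∈ s}, a (some i) • i.1.2) := by
        rw [Fintype.sum_option, map_sum]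
        congr 1
        exact Finset.sum_congr rfl fun i _ => by simp [map_smul]
      have hcsum : (∑ o, a o * Option.elim o θ (fun (_ : {p // p ∈ s}) => (0:ℝ)))
          = a none * θ := by
        rw [Fintype.sum_option]
        simp
      rw [hsum, hcsum]
      rcases eq_or_ne (a none) 0 with h0 | h0
      · rw [h0, zero_mul, abs_zero, zero_smul, zero_add]
        positivity
      · set w := ∑ i : {p // p ∈ s}, a (some i) • i.1.2 with hw
        have hfact : a none • Φ + J w = a none • (Φ - J (-(a none)⁻¹ • w)) := by
          rw [map_smul, smul_sub, smul_smul]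
          rw [mul_neg, mul_inv_cancel₀ h0]
          erw [neg_one_smul ℝ (J w), sub_neg_eq_add]
        have hdle : d ≤ ‖Φ - J (-(a none)⁻¹ • w)‖ := by
          rw [hd, ← dist_eq_norm (E := StrongDual ℝ (StrongDual ℝ X))]
          exact Metric.infDist_le_dist_of_mem ⟨_, rfl⟩
        have hnorm : ‖a none • Φ + J w‖ = |a none| * ‖Φ - J (-(a none)⁻¹ • w)‖ := by
          rw [hfact, norm_smul, Real.norm_eq_abs]
        rw [hnorm, abs_mul]
        have h1 : |θ| = θ := abs_of_pos hθ
        rw [h1, hθdef]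
        have h2 : |a none| * d ≤ |a none| * ‖Φ - J (-(a none)⁻¹ • w)‖ :=
          mul_le_mul_of_nonneg_left hdle (abs_nonneg _)
        nlinarith [abs_nonneg (a none)]
    obtain ⟨g, hgnorm, hgval⟩ :=
      helly (E := X →L[ℝ] ℝ) (ι := Option {p // p ∈ s})
        (fun o => Option.elim o Φ (fun i => J i.1.2))
        (fun o => Option.elim o θ 0)
        (M := 1/2) (ε := 1/2) (by norm_num) (by norm_num) condg
    have hgΦ : Φ g = θ := by simpa using hgval none
    have condy : ∀ a : Option {p // p ∈ s} → ℝ,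
        |∑ o, a o * (fun _ => θ) o| ≤
          ‖Φ‖ * ‖∑ o, a o • Option.elim o g (fun i => i.1.1)‖ := by
      intro a
      have hΦval : ∀ o : Option {p // p ∈ s},
          Φ (Option.elim o g (fun i => i.1.1)) = θ := by
        rintro (_ | ⟨i⟩)
        · exact hgΦ
        · exact (hs i.1 i.2).2.1
      have hcomp : Φ (∑ o, a o • Option.elim o g (fun i => i.1.1)) = ∑ o, a o * θ := by
        rw [map_sum]
        exact Finset.sum_congr rfl fun o _ => by rw [map_smul, smul_eq_mul, hΦval o]
      calc |∑ o, a o * (fun _ => θ) o|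
          = ‖Φ (∑ o, a o • Option.elim o g (fun i => i.1.1))‖ := by
            rw [hcomp, Real.norm_eq_abs]
      _ ≤ ‖Φ‖ * ‖∑ o, a o • Option.elim o g (fun i => i.1.1)‖ := Φ.le_opNorm _
    obtain ⟨y, hynorm, hyval⟩ :=
      helly (E := X) (ι := Option {p // p ∈ s})
        (fun o => Option.elim o g (fun i => i.1.1))
        (fun _ => θ)
        (M := ‖Φ‖) (ε := 1) (norm_nonneg Φ) one_pos condy
    refine ⟨(g, y), ⟨?_, ?_, ?_, ?_⟩, ?_⟩
    · linarith [hgnorm]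
    · exact hgΦ
    · simpa [hR] using hynorm
    · simpa using hyval none
    · intro p hp
      constructor
      · simpa using hyval (some ⟨p, hp⟩)
      · have := hgval (some ⟨p, hp⟩)
        simp only [Option.elim] at this
        simpa [hJ, NormedSpace.dual_def] using this
  obtain ⟨seq, hseqP, hseqr⟩ := exists_seq_of_forall_finset_exists P r key
  refine ⟨θ, R, fun n => (seq n).1, fun n => (seq n).2, hθ, hRpos, fun k => (hseqP k).1,
    fun n => (hseqP n).2.2.1, ?_, ?_⟩
  · intro k n hkn
    rcases eq_or_lt_of_le hkn with rfl | hlt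
    · exact (hseqP k).2.2.2
    · exact (hseqr k n hlt).1
  · intro k n hnk
    exact (hseqr n k hnk).2

/- `X ⊕∞ ℝ` is realized as `X × ℝ`, which in Mathlib carries the maximum norm;
`X` is identified with `X × {0}`. -/
theorem stmt_6 {X : Type*} [NormedAddCommGroup X] [NormedSpace ℝ X] [CompleteSpace X]
    (hX : ¬ ReflexiveSpace X) :
    ∃ C : Set (X × ℝ), C.Nonempty ∧ Bornology.IsBounded C ∧ Convex ℝ C ∧
      (∀ x : X, 0 < Metric.infDist ((x, 0) : X × ℝ) C) ∧
      (∀ ε > (0 : ℝ), ∃ M : Set X, M.Nonempty ∧ Metric.diam M < ε ∧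
        sInf ((fun x => Metric.infDist ((x, 0) : X × ℝ) C) '' M) = 0) := by
  classical
  obtain ⟨θ, R, f, x, hθ, hR, hf1, hxR, hfxθ, hfx0⟩ := exists_system hX
  set u : ℕ → ℕ → X :=
    fun a b => (1 - (1:ℝ)/(a+1)) • x (a+1) + ((1:ℝ)/(a+1)) • x (b+1) with hu
  set P2 : ℕ × ℕ → X × ℝ := fun p => (u p.1 p.2, 1/(p.2+1)) with hP2
  set C : Set (X × ℝ) := convexHull ℝ (Set.range P2) with hC
  -- elementary coefficient facts
  have hcoef : ∀ a : ℕ, 0 < (1:ℝ)/(a+1) ∧ (1:ℝ)/(a+1) ≤ 1 := by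
    intro a
    constructor
    · positivity
    · rw [div_le_one (by positivity)]
      have : (0:ℝ) ≤ a := Nat.cast_nonneg a
      linarith
  -- norm bound on u
  have hub : ∀ a b, ‖u a b‖ ≤ R := by
    intro a b
    obtain ⟨hs0, hs1⟩ := hcoef a
    have h1 : ‖u a b‖ ≤ (1 - 1/(a+1)) * ‖x (a+1)‖ + (1/(a+1)) * ‖x (b+1)‖ := by
      calc ‖u a b‖ ≤ ‖(1 - (1:ℝ)/(a+1)) • x (a+1)‖ + ‖((1:ℝ)/(a+1)) • x (b+1)‖ :=
            norm_add_le _ _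
      _ = (1 - 1/(a+1)) * ‖x (a+1)‖ + (1/(a+1)) * ‖x (b+1)‖ := by
            rw [norm_smul, norm_smul, Real.norm_eq_abs, Real.norm_eq_abs,
              abs_of_nonneg (by linarith), abs_of_pos hs0]
    have h2 := hxR (a+1)
    have h3 := hxR (b+1)
    have h4 := norm_nonneg (x (a+1))
    have h5 := norm_nonneg (x (b+1))
    nlinarith
  -- functional values on u
  have hfu : ∀ k a b, f k (u a b)
      = (1 - 1/(a+1)) * f k (x (a+1)) + (1/(a+1)) * f k (x (b+1)) := by
    intro k a b
    rw [hu]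
    simp [map_add, map_smul, smul_eq_mul]
  -- bounds B0
  have hB0 : ∀ k a b, 0 ≤ f k (u a b) ∧ f k (u a b) ≤ θ := by
    intro k a b
    obtain ⟨hs0, hs1⟩ := hcoef a
    rw [hfu]
    rcases le_or_gt k (a+1) with h | h <;> rcases le_or_gt k (b+1) with h' | h'
    · rw [hfxθ k (a+1) h, hfxθ k (b+1) h']
      constructor <;> nlinarith
    · rw [hfxθ k (a+1) h, hfx0 k (b+1) h']
      constructor <;> nlinarith
    · rw [hfx0 k (a+1) h, hfxθ k (b+1) h']
      constructor <;> nlinarith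
    · rw [hfx0 k (a+1) h, hfx0 k (b+1) h']
      constructor <;> nlinarith
  -- bound B1
  have hB1 : ∀ k a b, 2 ≤ k → k ≤ a + 1 → θ/2 ≤ f k (u a b) := by
    intro k a b hk2 hka
    obtain ⟨hs0, hs1⟩ := hcoef a
    have ha2 : (2:ℝ) ≤ (a:ℝ) + 1 := by exact_mod_cast le_trans hk2 hka
    have hs12 : (1:ℝ)/(a+1) ≤ 1/2 := by
      apply one_div_le_one_div_of_le <;> linarith
    rw [hfu, hfxθ k (a+1) hka]
    rcases le_or_gt k (b+1) with h' | h'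
    · rw [hfxθ k (b+1) h']; nlinarith
    · rw [hfx0 k (b+1) h']; nlinarith
  -- bound B2
  have hB2 : ∀ K k a b : ℕ, a + 1 < k → K ≤ b + 1 → θ/(k:ℝ) ≤ f K (u a b) := by
    intro K k a b hak hKb
    obtain ⟨hs0, hs1⟩ := hcoef a
    have hak' : ((a:ℝ) + 1) ≤ (k:ℝ) := by exact_mod_cast hak.le
    have hkpos : (0:ℝ) < k := by linarith
    have h1 : θ/(k:ℝ) ≤ θ/((a:ℝ)+1) := by
      rw [div_le_div_iff₀ hkpos (by positivity)]
      nlinarith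
    have h2 : θ/((a:ℝ)+1) = (1/(a+1)) * θ := by ring
    rw [hfu, hfxθ K (b+1) hKb]
    rcases le_or_gt K (a+1) with h | h
    · rw [hfxθ K (a+1) h]; nlinarith
    · rw [hfx0 K (a+1) h]; nlinarith
  set R' := max R 1 with hR'
  have hCsub : C ⊆ Metric.closedBall 0 R' := by
    rw [hC]
    apply convexHull_min _ (convex_closedBall _ _)
    rintro _ ⟨p, rfl⟩
    rw [Metric.mem_closedBall, dist_zero_right, hP2, Prod.norm_def]
    apply max_le
    · exact le_trans (hub p.1 p.2) (le_max_left _ _)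
    · rw [Real.norm_eq_abs, abs_of_pos (hcoef p.2).1]
      exact le_trans (hcoef p.2).2 (le_max_right _ _)
  have hCne : C.Nonempty := ⟨P2 (0,0), subset_convexHull ℝ _ ⟨(0,0), rfl⟩⟩
  have hmemC : ∀ p : ℕ × ℕ, P2 p ∈ C := fun p => subset_convexHull ℝ _ ⟨p, rfl⟩
  refine ⟨C, hCne, (Metric.isBounded_closedBall).subset hCsub, convex_convexHull ℝ _, ?_, ?_⟩
  · -- positivity of the distance function
    intro z
    by_contra hpos
    push_neg at hpos
    have h0 : Metric.infDist ((z,0) : X × ℝ) C = 0 :=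
      le_antisymm hpos Metric.infDist_nonneg
    have hcl : ((z,0) : X × ℝ) ∈ closure C :=
      (Metric.mem_closure_iff_infDist_zero hCne).2 h0
    -- approximation by convex combinations
    have approx : ∀ δ > (0:ℝ), ∃ (ι : Type) (t : Finset ι) (w : ι → ℝ) (q : ι → ℕ × ℕ),
        (∀ i ∈ t, 0 ≤ w i) ∧ (∑ i ∈ t, w i) = 1 ∧
        ‖z - ∑ i ∈ t, w i • u (q i).1 (q i).2‖ < δ ∧
        |∑ i ∈ t, w i * (1/((q i).2+1))| < δ := by
      intro δ hδ
      obtain ⟨c, hcC, hdist⟩ := Metric.mem_closure_iff.1 hcl δ hδ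
      rw [hC, _root_.convexHull_eq, Set.mem_setOf_eq] at hcC
      obtain ⟨ι, t, w, zf, hw0, hw1, hzf, hcm⟩ := hcC
      have hq : ∀ i : ι, ∃ p : ℕ × ℕ, i ∈ t → P2 p = zf i := by
        intro i
        by_cases hi : i ∈ t
        · obtain ⟨p, hp⟩ := hzf i hi
          exact ⟨p, fun _ => hp⟩
        · exact ⟨(0,0), fun h => absurd h hi⟩
      choose q hq using hq
      rw [Finset.centerMass_eq_of_sum_1 _ _ hw1] at hcm
      have hfst : c.1 = ∑ i ∈ t, w i • u (q i).1 (q i).2 := by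
        rw [← hcm, Prod.fst_sum]
        exact Finset.sum_congr rfl fun i hi => by
          rw [Prod.smul_fst, ← hq i hi]
      have hsnd : c.2 = ∑ i ∈ t, w i * (1/((q i).2+1)) := by
        rw [← hcm, Prod.snd_sum]
        exact Finset.sum_congr rfl fun i hi => by
          rw [Prod.smul_snd, ← hq i hi, smul_eq_mul]
      rw [Prod.dist_eq, max_lt_iff] at hdist
      obtain ⟨hd1, hd2⟩ := hdist
      refine ⟨ι, t, w, q, hw0, hw1, ?_, ?_⟩
      · rw [← hfst, ← dist_eq_norm]
        exact hd1
      · rw [← hsnd]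
        rw [Real.dist_eq] at hd2
        rwa [abs_sub_comm, sub_zero] at hd2
    -- the functional computation on combinations
    have hfsum : ∀ (k : ℕ) (ι : Type) (t : Finset ι) (w : ι → ℝ) (q : ι → ℕ × ℕ),
        f k (∑ i ∈ t, w i • u (q i).1 (q i).2) = ∑ i ∈ t, w i * f k (u (q i).1 (q i).2) := by
      intro k ι t w q
      rw [map_sum]
      exact Finset.sum_congr rfl fun i _ => by rw [map_smul, smul_eq_mul]
    have hfz_close : ∀ (k : ℕ) (S : X) (δ : ℝ), ‖z - S‖ < δ → |f k z - f k S| ≤ δ := by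
      intro k S δ hS
      have h1 : f k z - f k S = f k (z - S) := by rw [map_sub]
      rw [h1, ← Real.norm_eq_abs]
      calc ‖f k (z - S)‖ ≤ ‖f k‖ * ‖z - S‖ := (f k).le_opNorm _
      _ ≤ 1 * ‖z - S‖ := mul_le_mul_of_nonneg_right (hf1 k) (norm_nonneg _)
      _ = ‖z - S‖ := one_mul _
      _ ≤ δ := hS.le
    -- Claim 1 : 0 ≤ f k z ≤ θ
    have hclaim1 : ∀ k, 0 ≤ f k z ∧ f k z ≤ θ := by
      intro k
      have hkey : ∀ δ > (0:ℝ), 0 ≤ f k z + δ ∧ f k z ≤ θ + δ := by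
        intro δ hδ
        obtain ⟨ι, t, w, q, hw0, hw1, hz1, _⟩ := approx δ hδ
        set S := ∑ i ∈ t, w i • u (q i).1 (q i).2 with hSdef
        have hd := abs_le.1 (hfz_close k S δ hz1)
        have hfS : f k S = ∑ i ∈ t, w i * f k (u (q i).1 (q i).2) := hfsum k ι t w q
        have hfS0 : 0 ≤ f k S := by
          rw [hfS]
          exact Finset.sum_nonneg fun i hi => mul_nonneg (hw0 i hi) (hB0 k _ _).1
        have hfSθ : f k S ≤ θ := by
          rw [hfS]
          calc ∑ i ∈ t, w i * f k (u (q i).1 (q i).2) ≤ ∑ i ∈ t, w i * θ :=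
                Finset.sum_le_sum fun i hi =>
                  mul_le_mul_of_nonneg_left (hB0 k _ _).2 (hw0 i hi)
          _ = θ := by rw [← Finset.sum_mul, hw1, one_mul]
        constructor <;> linarith [hd.1, hd.2]
      constructor
      · have : -(f k z) ≤ 0 := le_forall_pos fun δ hδ => by linarith [(hkey δ hδ).1]
        linarith
      · exact le_forall_pos fun δ hδ => (hkey δ hδ).2
    -- Claim 2 : f k z → 0
    have hclaim2 : ∀ ρ > (0:ℝ), ∃ N, ∀ k, N ≤ k → |f k z| ≤ ρ := by
      intro ρ hρ
      obtain ⟨ι, t, w, q, hw0, hw1, hz1, _⟩ := approx (ρ/2) (by linarith)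
      set S := ∑ i ∈ t, w i • u (q i).1 (q i).2 with hSdef
      set N := (t.sup fun i => max ((q i).1 + 1) ((q i).2 + 1)) + 1 with hN
      refine ⟨N, fun k hk => ?_⟩
      have hfS0 : f k S = 0 := by
        rw [hfsum k ι t w q]
        apply Finset.sum_eq_zero
        intro i hi
        rw [hN] at hk
        have hle := Finset.le_sup (f := fun i => max ((q i).1 + 1) ((q i).2 + 1)) hi
        try simp only at hle
        have h1 : (q i).1 + 1 < k := by omega
        have h2 : (q i).2 + 1 < k := by omega
        rw [hfu, hfx0 k _ h1, hfx0 k _ h2]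
        ring
      have := hfz_close k S (ρ/2) hz1
      rw [hfS0, sub_zero] at this
      linarith
    -- Claim 3 : the key quantitative estimate
    have hclaim3 : ∀ k K : ℕ, 2 ≤ k → θ - 2 * f k z ≤ (k:ℝ) * f K z := by
      intro k K hk2
      have hkpos : (0:ℝ) < (k:ℝ) := by
        have : (2:ℝ) ≤ (k:ℝ) := by exact_mod_cast hk2
        linarith
      apply le_forall_pos
      intro ε hε
      set c1 : ℝ := 2 + θ * K + k with hc1
      have hc1pos : 0 < c1 := by
        have h1 : 0 ≤ θ * K := mul_nonneg hθ.le (Nat.cast_nonneg K)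
        rw [hc1]; linarith
      set δ : ℝ := ε / c1 with hδdef
      have hδpos : 0 < δ := div_pos hε hc1pos
      have hδc1 : δ * c1 = ε := div_mul_cancel₀ ε hc1pos.ne'
      obtain ⟨ι, t, w, q, hw0, hw1, hz1, ht2⟩ := approx δ hδpos
      set S := ∑ i ∈ t, w i • u (q i).1 (q i).2 with hSdef
      have hdk := abs_le.1 (hfz_close k S δ hz1)
      have hdK := abs_le.1 (hfz_close K S δ hz1)
      set p1 : ι → Prop := fun i => k ≤ (q i).1 + 1 with hp1
      set p3 : ι → Prop := fun i => (q i).2 + 1 < K with hp3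
      set t1 := t.filter p1 with ht1def
      set t3 := t.filter (fun i => ¬ p1 i ∧ p3 i) with ht3def
      set t2 := t.filter (fun i => ¬ p1 i ∧ ¬ p3 i) with ht2def
      set S1 := ∑ i ∈ t1, w i with hS1def
      set S3 := ∑ i ∈ t3, w i with hS3def
      set S2 := ∑ i ∈ t2, w i with hS2def
      -- splitting
      have hsplit : S1 + (S3 + S2) = 1 := by
        rw [hS1def, hS3def, hS2def, ht1def, ht3def, ht2def]
        rw [← hw1]
        rw [← Finset.sum_filter_add_sum_filter_not t p1 w]
        congr 1
        rw [← Finset.sum_filter_add_sum_filter_not (t.filter fun i => ¬ p1 i) p3 w]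
        rw [Finset.filter_filter, Finset.filter_filter]
      -- estimate for S1
      have hθS1 : θ * S1 ≤ 2 * f k z + 2 * δ := by
        have h1 : ∑ i ∈ t1, w i * (θ/2) ≤ ∑ i ∈ t1, w i * f k (u (q i).1 (q i).2) := by
          apply Finset.sum_le_sum
          intro i hi
          rw [ht1def, Finset.mem_filter] at hi
          exact mul_le_mul_of_nonneg_left (hB1 k _ _ hk2 hi.2) (hw0 i hi.1)
        have h2 : ∑ i ∈ t1, w i * f k (u (q i).1 (q i).2)
            ≤ ∑ i ∈ t, w i * f k (u (q i).1 (q i).2) := by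
          apply Finset.sum_le_sum_of_subset_of_nonneg (Finset.filter_subset _ _)
          intro i hi _
          exact mul_nonneg (hw0 i hi) (hB0 k _ _).1
        have h3 : ∑ i ∈ t1, w i * (θ/2) = (θ/2) * S1 := by
          rw [hS1def, Finset.mul_sum]
          exact Finset.sum_congr rfl fun i _ => mul_comm _ _
        have h4 : f k S ≤ f k z + δ := by linarith [(abs_le.1 (hfz_close k S δ hz1)).1]
        have h5 : f k S = ∑ i ∈ t, w i * f k (u (q i).1 (q i).2) := hfsum k ι t w q
        rw [h3] at h1
        rw [← h5] at h2
        linarith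
      -- estimate for S3
      have hS3le : S3 ≤ (K:ℝ) * δ := by
        have h1 : ∀ i ∈ t3, w i ≤ (K:ℝ) * (w i * (1/((q i).2+1))) := by
          intro i hi
          rw [ht3def, Finset.mem_filter] at hi
          obtain ⟨hit, -, hiK⟩ := hi
          have hb1 : ((q i).2:ℝ) + 1 ≤ (K:ℝ) := by exact_mod_cast hiK.le
          have hbpos : (0:ℝ) < ((q i).2:ℝ) + 1 := by positivity
          have hw := hw0 i hit
          rw [mul_comm (K:ℝ) _, mul_assoc]
          have h2 : (1:ℝ) ≤ 1/(((q i).2:ℝ)+1) * K := by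
            rw [div_mul_eq_mul_div, one_mul, le_div_iff₀ hbpos]
            linarith
          nlinarith
        have h2 : S3 ≤ ∑ i ∈ t3, (K:ℝ) * (w i * (1/((q i).2+1))) := by
          rw [hS3def]
          exact Finset.sum_le_sum h1
        have h3 : ∑ i ∈ t3, (K:ℝ) * (w i * (1/((q i).2+1)))
            = (K:ℝ) * ∑ i ∈ t3, w i * (1/((q i).2+1)) := by
          rw [Finset.mul_sum]
        have h4 : ∑ i ∈ t3, w i * (1/((q i).2+1)) ≤ ∑ i ∈ t, w i * (1/((q i).2+1)) := by
          apply Finset.sum_le_sum_of_subset_of_nonneg (Finset.filter_subset _ _)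
          intro i hi _
          exact mul_nonneg (hw0 i hi) (le_of_lt (hcoef (q i).2).1)
        have h5 : ∑ i ∈ t, w i * (1/((q i).2+1)) ≤ δ := le_trans (le_abs_self _) ht2.le
        have hK0 : (0:ℝ) ≤ (K:ℝ) := Nat.cast_nonneg K
        calc S3 ≤ (K:ℝ) * ∑ i ∈ t3, w i * (1/((q i).2+1)) := by rw [← h3]; exact h2
        _ ≤ (K:ℝ) * δ := mul_le_mul_of_nonneg_left (le_trans h4 h5) hK0
      -- estimate for S2
      have hθS2 : θ * S2 ≤ (k:ℝ) * (f K z + δ) := by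
        have h1 : ∑ i ∈ t2, w i * (θ/(k:ℝ)) ≤ ∑ i ∈ t2, w i * f K (u (q i).1 (q i).2) := by
          apply Finset.sum_le_sum
          intro i hi
          rw [ht2def, Finset.mem_filter] at hi
          obtain ⟨hit, hnp1, hnp3⟩ := hi
          rw [hp1] at hnp1
          rw [hp3] at hnp3
          exact mul_le_mul_of_nonneg_left
            (hB2 K k _ _ (Nat.lt_of_not_le hnp1) (Nat.le_of_not_lt hnp3)) (hw0 i hit)
        have h2 : ∑ i ∈ t2, w i * f K (u (q i).1 (q i).2)
            ≤ ∑ i ∈ t, w i * f K (u (q i).1 (q i).2) := by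
          apply Finset.sum_le_sum_of_subset_of_nonneg (Finset.filter_subset _ _)
          intro i hi _
          exact mul_nonneg (hw0 i hi) (hB0 K _ _).1
        have h3 : ∑ i ∈ t2, w i * (θ/(k:ℝ)) = (θ/(k:ℝ)) * S2 := by
          rw [hS2def, Finset.mul_sum]
          exact Finset.sum_congr rfl fun i _ => mul_comm _ _
        have h4 : f K S ≤ f K z + δ := by linarith [(abs_le.1 (hfz_close K S δ hz1)).1]
        have h5 : f K S = ∑ i ∈ t, w i * f K (u (q i).1 (q i).2) := hfsum K ι t w q
        have h6 : (θ/(k:ℝ)) * S2 ≤ f K z + δ := by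
          rw [← h3]
          rw [← h5] at h2
          linarith
        have h7 := mul_le_mul_of_nonneg_left h6 hkpos.le
        calc θ * S2 = (k:ℝ) * ((θ/(k:ℝ)) * S2) := by field_simp
        _ ≤ (k:ℝ) * (f K z + δ) := h7
      -- combine
      have hsum : θ * S1 + θ * S3 + θ * S2 = θ := by
        have : θ * (S1 + (S3 + S2)) = θ * 1 := by rw [hsplit]
        ring_nf at this ⊢
        linarith [this]
      have hθS3 : θ * S3 ≤ θ * ((K:ℝ) * δ) := mul_le_mul_of_nonneg_left hS3le hθ.le
      have hfinal : θ - 2 * f k z ≤ (k:ℝ) * f K z + δ * c1 := by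
        rw [hc1]
        nlinarith [hθS1, hθS3, hθS2, hsum]
      rw [hδc1] at hfinal
      exact hfinal
    -- derive contradiction from the claims
    obtain ⟨N, hN⟩ := hclaim2 (θ/4) (by linarith)
    set k := max N 2 with hkdef
    have hk2 : 2 ≤ k := le_max_right _ _
    have hkN : N ≤ k := le_max_left _ _
    have hfk : f k z ≤ θ/4 := by
      have := abs_le.1 (hN k hkN)
      linarith [this.2]
    have hkpos : (0:ℝ) < (k:ℝ) := by
      have : (2:ℝ) ≤ (k:ℝ) := by exact_mod_cast hk2
      linarith
    have hlow : ∀ K : ℕ, θ/2 ≤ (k:ℝ) * f K z := by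
      intro K
      have := hclaim3 k K hk2
      linarith
    obtain ⟨N2, hN2⟩ := hclaim2 (θ/(4*(k:ℝ))) (by positivity)
    have h1 := hlow N2
    have h2 := abs_le.1 (hN2 N2 le_rfl)
    have h3 : (k:ℝ) * f N2 z ≤ (k:ℝ) * (θ/(4*(k:ℝ))) :=
      mul_le_mul_of_nonneg_left h2.2 hkpos.le
    have h4 : (k:ℝ) * (θ/(4*(k:ℝ))) = θ/4 := by field_simp
    rw [h4] at h3
    linarith
  · -- small diameter sets with zero infimum
    intro ε hε
    obtain ⟨m, hm⟩ := exists_nat_gt (2*R/ε)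
    have hmpos : (0:ℝ) < (m:ℝ) + 1 := by positivity
    have hmR : 2*R/((m:ℝ)+1) < ε := by
      rw [div_lt_iff₀ hmpos]
      have h1 : 2*R < ε * m := by
        rw [div_lt_iff₀ hε] at hm
        linarith
      nlinarith
    refine ⟨Set.range (fun b => u m b), ⟨u m 0, 0, rfl⟩, ?_, ?_⟩
    · -- diameter
      apply lt_of_le_of_lt (Metric.diam_le_of_forall_dist_le
        (C := 2*R/((m:ℝ)+1)) (by positivity) ?_) hmR
      rintro _ ⟨b, rfl⟩ _ ⟨b', rfl⟩
      have hdiff : u m b - u m b' = ((1:ℝ)/(m+1)) • (x (b+1) - x (b'+1)) := by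
        rw [hu]
        simp only [smul_sub]
        abel
      rw [dist_eq_norm, hdiff, norm_smul, Real.norm_eq_abs, abs_of_pos (hcoef m).1]
      have h1 : ‖x (b+1) - x (b'+1)‖ ≤ 2*R := by
        calc ‖x (b+1) - x (b'+1)‖ ≤ ‖x (b+1)‖ + ‖x (b'+1)‖ := norm_sub_le _ _
        _ ≤ 2*R := by linarith [hxR (b+1), hxR (b'+1)]
      calc (1/((m:ℝ)+1)) * ‖x (b+1) - x (b'+1)‖ ≤ (1/((m:ℝ)+1)) * (2*R) :=
            mul_le_mul_of_nonneg_left h1 (le_of_lt (hcoef m).1)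
      _ = 2*R/((m:ℝ)+1) := by ring
    · -- infimum is zero
      set g : X → ℝ := fun y => Metric.infDist ((y,0) : X × ℝ) C with hg
      have hgnn : ∀ y, 0 ≤ g y := fun y => Metric.infDist_nonneg
      have hgb : ∀ b : ℕ, g (u m b) ≤ 1/((b:ℝ)+1) := by
        intro b
        have h1 : dist ((u m b, 0) : X × ℝ) (P2 (m, b)) = 1/((b:ℝ)+1) := by
          rw [hP2, Prod.dist_eq]
          simp only [dist_self]
          rw [Real.dist_eq, zero_sub, abs_neg, abs_of_pos (hcoef b).1]
          exact max_eq_right (le_of_lt (hcoef b).1)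
        rw [hg, ← h1]
        exact Metric.infDist_le_dist_of_mem (hmemC (m, b))
      have hbdd : BddBelow ((fun y => Metric.infDist ((y,0) : X × ℝ) C) '' Set.range (fun b => u m b)) := by
        refine ⟨0, ?_⟩
        rintro _ ⟨y, -, rfl⟩
        exact Metric.infDist_nonneg
      apply le_antisymm
      · by_contra hlt
        push_neg at hlt
        obtain ⟨b, hb⟩ := exists_nat_one_div_lt hlt
        have h1 : sInf ((fun y => Metric.infDist ((y,0) : X × ℝ) C) '' Set.range (fun b => u m b))
            ≤ g (u m b) := csInf_le hbdd ⟨u m b, ⟨b, rfl⟩, rfl⟩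
        have h2 := hgb b
        linarith
      · apply le_csInf
        · exact ⟨g (u m 0), ⟨u m 0, ⟨0, rfl⟩, rfl⟩⟩
        · rintro _ ⟨y, -, rfl⟩
          exact Metric.infDist_nonneg
end

section
/- With eᵢ, eᵢ* as in James' lemma (unit vectors and functionals with eᵢ*(eⱼ)=0 for i>j, eᵢ*(eⱼ)>1/2 for i≤j), set C := conv{2e_k + (1/k)e∞ : k ∈ ℕ} in X ⊕∞ ℝ. Then inf_{x ∈ X} dist((x,0), C) = 0, and dist((x,0), C̄) > 0 for every x ∈ X (i.e., the closure of C misses X × {0}). -/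
open Metric

/-- The key properties hold on a convex set containing the generators, hence on the hull. -/
lemma stmt_7_aux {X : Type*} [NormedAddCommGroup X] [NormedSpace ℝ X]
    (e : ℕ → X) (estar : ℕ → StrongDual ℝ X)
    (h0 : ∀ i j, 1 ≤ j → j < i → estar i (e j) = 0)
    (h2 : ∀ i j, 1 ≤ i → i ≤ j → (1 : ℝ) / 2 < estar i (e j))
    (p : X × ℝ)
    (hp : p ∈ convexHull ℝ {q : X × ℝ | ∃ k : ℕ, 1 ≤ k ∧ q = ((2 : ℝ) • e k, 1 / (k : ℝ))}) :
    0 ≤ p.2 ∧ (∀ i : ℕ, 1 ≤ i → 1 - (i : ℝ) * p.2 ≤ estar i p.1) ∧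
      (∃ n : ℕ, ∀ i : ℕ, n ≤ i → estar i p.1 = 0) := by
  set D : Set (X × ℝ) := {q : X × ℝ | 0 ≤ q.2 ∧
      (∀ i : ℕ, 1 ≤ i → 1 - (i : ℝ) * q.2 ≤ estar i q.1) ∧
      (∃ n : ℕ, ∀ i : ℕ, n ≤ i → estar i q.1 = 0)} with hD
  have hconv : Convex ℝ D := by
    rintro q ⟨hq2, hqi, nq, hnq⟩ r ⟨hr2, hri, nr, hnr⟩ a b ha hb hab
    refine ⟨?_, ?_, ?_⟩
    · have : (a • q + b • r).2 = a * q.2 + b * r.2 := rfl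
      rw [this]
      positivity
    · intro i hi
      have h1 : (a • q + b • r).2 = a * q.2 + b * r.2 := rfl
      have h2' : (a • q + b • r).1 = a • q.1 + b • r.1 := rfl
      rw [h1, h2', map_add, map_smul, map_smul]
      have hq' := hqi i hi
      have hr' := hri i hi
      have := add_le_add (mul_le_mul_of_nonneg_left hq' ha)
        (mul_le_mul_of_nonneg_left hr' hb)
      simp only [smul_eq_mul]
      nlinarith [this]
    · refine ⟨max nq nr, fun i hi => ?_⟩
      have h2' : (a • q + b • r).1 = a • q.1 + b • r.1 := rfl
      rw [h2', map_add, map_smul, map_smul,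
        hnq i (le_trans (le_max_left _ _) hi), hnr i (le_trans (le_max_right _ _) hi)]
      simp
  have hsub : {q : X × ℝ | ∃ k : ℕ, 1 ≤ k ∧ q = ((2 : ℝ) • e k, 1 / (k : ℝ))} ⊆ D := by
    rintro q ⟨k, hk, rfl⟩
    have hk0 : (0 : ℝ) < (k : ℝ) := by exact_mod_cast hk
    refine ⟨by positivity, ?_, ⟨k + 1, fun i hi => ?_⟩⟩
    · intro i hi
      simp only [map_smul, smul_eq_mul]
      rcases le_or_gt i k with h | h
      · have := h2 i k hi h
        have hik : (0:ℝ) ≤ (i:ℝ) * (1 / k) := by positivity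
        nlinarith
      · rw [h0 i k hk h, mul_zero]
        have : (1 : ℝ) ≤ (i : ℝ) * (1 / k) := by
          rw [mul_one_div, le_div_iff₀ hk0, one_mul]
          exact_mod_cast h.le
        linarith
    · simp only [map_smul, smul_eq_mul]
      rw [h0 i k hk (by omega), mul_zero]
  exact convexHull_min hsub hconv hp

theorem stmt_7 {X : Type*} [NormedAddCommGroup X] [NormedSpace ℝ X] [CompleteSpace X]
    (e : ℕ → X) (estar : ℕ → StrongDual ℝ X)
    (he : ∀ i, 1 ≤ i → ‖e i‖ = 1) (hestar : ∀ i, 1 ≤ i → ‖estar i‖ = 1)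
    (h0 : ∀ i j, 1 ≤ j → j < i → estar i (e j) = 0)
    (h2 : ∀ i j, 1 ≤ i → i ≤ j → (1 : ℝ) / 2 < estar i (e j))
    (C : Set (X × ℝ))
    (hC : C = convexHull ℝ
      {p : X × ℝ | ∃ k : ℕ, 1 ≤ k ∧ p = ((2 : ℝ) • e k, 1 / (k : ℝ))}) :
    (⨅ x : X, Metric.infDist ((x, 0) : X × ℝ) C) = 0 ∧
    ∀ x : X, 0 < Metric.infDist ((x, 0) : X × ℝ) (closure C) := by
  have hmem : ∀ k : ℕ, 1 ≤ k → ((2 : ℝ) • e k, 1 / (k : ℝ)) ∈ C := by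
    intro k hk
    rw [hC]
    exact subset_convexHull ℝ _ ⟨k, hk, rfl⟩
  have hCne : C.Nonempty := ⟨_, hmem 1 le_rfl⟩
  -- the estimate: |estar i x - estar i y| ≤ ‖x - y‖
  have hlip : ∀ (i : ℕ), 1 ≤ i → ∀ x y : X, |estar i x - estar i y| ≤ ‖x - y‖ := by
    intro i hi x y
    calc |estar i x - estar i y| = ‖estar i (x - y)‖ := by rw [map_sub]; rfl
      _ ≤ ‖estar i‖ * ‖x - y‖ := (estar i).le_opNorm _
      _ = ‖x - y‖ := by rw [hestar i hi, one_mul]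
  constructor
  · refine le_antisymm ?_ (le_ciInf fun x => infDist_nonneg)
    by_contra h
    push_neg at h
    obtain ⟨n, hn⟩ := exists_nat_one_div_lt h
    have hbdd : BddBelow (Set.range fun x : X => infDist ((x, 0) : X × ℝ) C) := by
      refine ⟨0, ?_⟩
      rintro _ ⟨x, rfl⟩
      exact infDist_nonneg
    have hle : (⨅ x : X, infDist ((x, 0) : X × ℝ) C)
        ≤ infDist (((2 : ℝ) • e (n + 1), 0) : X × ℝ) C := ciInf_le hbdd _
    have hd : infDist (((2 : ℝ) • e (n + 1), 0) : X × ℝ) C ≤ 1 / ((n : ℝ) + 1) := by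
      have := infDist_le_dist_of_mem
        (x := (((2 : ℝ) • e (n + 1), 0) : X × ℝ)) (hmem (n + 1) (by omega))
      refine le_trans this ?_
      rw [Prod.dist_eq]
      simp only [dist_self, Real.dist_eq]
      push_cast
      rw [zero_sub, abs_neg, abs_of_nonneg (by positivity)]
      exact max_le (by positivity) le_rfl
    linarith
  · intro x
    rw [infDist_closure]
    by_contra hcon
    push_neg at hcon
    have h0' : infDist ((x, 0) : X × ℝ) C = 0 := le_antisymm hcon infDist_nonneg
    -- step 1: for every i ≥ 1, 1/2 ≤ estar i x
    have step1 : ∀ i : ℕ, 1 ≤ i → (1 : ℝ) / 2 ≤ estar i x := by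
      intro i hi
      have hε : (0 : ℝ) < 1 / (4 * ((i : ℝ) + 1)) := by positivity
      have : infDist ((x, 0) : X × ℝ) C < 1 / (4 * ((i : ℝ) + 1)) := by
        rw [h0']; exact hε
      rw [infDist_lt_iff hCne] at this
      obtain ⟨p, hpC, hpd⟩ := this
      rw [hC] at hpC
      obtain ⟨hp2, hpi, _⟩ := stmt_7_aux e estar h0 h2 p hpC
      rw [Prod.dist_eq, max_lt_iff] at hpd
      obtain ⟨hd1, hd2⟩ := hpd
      rw [Real.dist_eq, zero_sub, abs_neg] at hd2
      have hs : p.2 < 1 / (4 * ((i : ℝ) + 1)) := lt_of_le_of_lt (le_abs_self _) hd2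
      have h1 : 1 - (i : ℝ) * p.2 ≤ estar i p.1 := hpi i hi
      have h2' : |estar i x - estar i p.1| ≤ ‖x - p.1‖ := hlip i hi x p.1
      rw [dist_eq_norm] at hd1
      have hi1 : (1 : ℝ) ≤ (i : ℝ) := by exact_mod_cast hi
      have habs := abs_le.mp h2'
      have hib : (i : ℝ) * p.2 < (i : ℝ) * (1 / (4 * ((i : ℝ) + 1))) :=
        mul_lt_mul_of_pos_left hs (by linarith)
      have hq : (i : ℝ) * (1 / (4 * ((i : ℝ) + 1))) ≤ 1 / 4 := by
        rw [mul_one_div, div_le_div_iff₀ (by positivity) (by norm_num)]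
        linarith
      have hε' : 1 / (4 * ((i : ℝ) + 1)) ≤ 1 / 4 := by
        rw [div_le_div_iff₀ (by positivity) (by norm_num)]
        nlinarith [Nat.cast_nonneg (α := ℝ) i]
      linarith [habs.1]
    -- step 2: find p close to x whose support misses some estar i
    have : infDist ((x, 0) : X × ℝ) C < 1 / 4 := by rw [h0']; norm_num
    rw [infDist_lt_iff hCne] at this
    obtain ⟨p, hpC, hpd⟩ := this
    rw [hC] at hpC
    obtain ⟨_, _, n, hn⟩ := stmt_7_aux e estar h0 h2 p hpC
    rw [Prod.dist_eq, max_lt_iff] at hpd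
    obtain ⟨hd1, _⟩ := hpd
    rw [dist_eq_norm] at hd1
    set i := max n 1 with hi
    have hi1 : 1 ≤ i := le_max_right _ _
    have := step1 i hi1
    have hz : estar i p.1 = 0 := hn i (le_max_left _ _)
    have := hlip i hi1 x p.1
    rw [hz, sub_zero] at this
    have := abs_le.mp this
    linarith [this.1, this.2]
end

section
/- With the setup above (φ convex 1-Lipschitz positive on X, β > sup φ(B(0,r)), D = {(x, φ(x)−β) : x ∈ B(0,r)}, C = closed convex hull of D ∪ (−D) in X ⊕∞ ℝ), the functional y*(x,t) := t satisfies inf y*(C) = −β, and there is no point z ∈ C with y*(z) = −β. -/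
/- `X ⊕∞ ℝ` is realized as `X × ℝ`, which in Mathlib carries the maximum norm.
The functional `y*` is `(x, t) ↦ t`. -/
theorem stmt_14 {X : Type*} [NormedAddCommGroup X] [NormedSpace ℝ X] [CompleteSpace X]
    (φ : X → ℝ) (hconv : ConvexOn ℝ Set.univ φ) (hlip : LipschitzWith 1 φ)
    (hpos : ∀ x, 0 < φ x)
    (r : ℝ) (hr : 0 < r) (hinf : sInf (φ '' Metric.closedBall (0 : X) r) = 0)
    (β : ℝ) (hβ : sSup (φ '' Metric.closedBall (0 : X) r) < β)
    (D : Set (X × ℝ))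
    (hD : D = {p : X × ℝ | ∃ x ∈ Metric.closedBall (0 : X) r, p = (x, φ x - β)})
    (C : Set (X × ℝ)) (hC : C = closure (convexHull ℝ (D ∪ -D))) :
    sInf ((fun p : X × ℝ => p.2) '' C) = -β ∧
    ¬ ∃ z ∈ C, (z : X × ℝ).2 = -β := by
  have hφcont : Continuous φ := hlip.continuous
  -- boundedness of φ on the ball
  have hbddA : BddAbove (φ '' Metric.closedBall (0 : X) r) := by
    refine ⟨φ 0 + r, ?_⟩
    rintro t ⟨x, hx, rfl⟩
    have h := hlip.dist_le_mul x 0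
    rw [Real.dist_eq] at h
    have hx' : dist x 0 ≤ r := Metric.mem_closedBall.mp hx
    have := abs_le.mp (le_trans h (by simpa using hx'))
    linarith [this.2]
  have hφlt : ∀ x ∈ Metric.closedBall (0 : X) r, φ x < β := fun x hx =>
    lt_of_le_of_lt (le_csSup hbddA ⟨x, hx, rfl⟩) hβ
  set E : Set (X × ℝ) :=
    {p : X × ℝ | p.1 ∈ Metric.closedBall (0 : X) r ∧ φ p.1 - β ≤ p.2} with hE
  have hEconv : Convex ℝ E := by
    rintro p ⟨hp1, hp2⟩ q ⟨hq1, hq2⟩ a b ha hb hab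
    refine ⟨(convex_closedBall (0:X) r) hp1 hq1 ha hb hab, ?_⟩
    have h1 : φ (a • p.1 + b • q.1) ≤ a * φ p.1 + b * φ q.1 :=
      hconv.2 (Set.mem_univ p.1) (Set.mem_univ q.1) ha hb hab
    have hfst : (a • p + b • q).1 = a • p.1 + b • q.1 := rfl
    have hsnd : (a • p + b • q).2 = a * p.2 + b * q.2 := rfl
    rw [hfst, hsnd]
    have hβab : a * β + b * β = β := by rw [← add_mul, hab, one_mul]
    nlinarith [mul_le_mul_of_nonneg_left hp2 ha, mul_le_mul_of_nonneg_left hq2 hb, hβab]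
  have hEclosed : IsClosed E := by
    have h1 : IsClosed {p : X × ℝ | p.1 ∈ Metric.closedBall (0 : X) r} :=
      Metric.isClosed_closedBall.preimage continuous_fst
    have h2 : IsClosed {p : X × ℝ | φ p.1 - β ≤ p.2} :=
      isClosed_le (by continuity) continuous_snd
    exact h1.inter h2
  have hDE : D ⊆ E := by
    rintro p hp
    rw [hD] at hp
    obtain ⟨x, hx, rfl⟩ := hp
    exact ⟨hx, le_refl _⟩
  have hnDE : -D ⊆ E := by
    rintro p hp
    rw [Set.mem_neg, hD] at hp
    obtain ⟨x, hx, hpx⟩ := hp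
    have hp1 : p.1 = -x := by
      have := congrArg Prod.fst hpx; simpa using congrArg Neg.neg this
    have hp2 : p.2 = β - φ x := by
      have := congrArg Prod.snd hpx; simp at this; linarith
    have hnx : -x ∈ Metric.closedBall (0 : X) r := by
      simpa using Metric.mem_closedBall.mp hx
    refine ⟨by rw [hp1]; exact hnx, ?_⟩
    rw [hp1, hp2]
    have h1 := hφlt x hx
    have h2 := hφlt (-x) hnx
    linarith
  have hCE : C ⊆ E := by
    rw [hC]
    exact closure_minimal (convexHull_min (Set.union_subset hDE hnDE) hEconv) hEclosed
  have hDC : D ⊆ C := by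
    rw [hC]
    exact (Set.subset_union_left.trans (subset_convexHull ℝ _)).trans subset_closure
  -- the image set
  set S := (fun p : X × ℝ => p.2) '' C with hS
  have hSne : S.Nonempty := by
    refine ⟨φ 0 - β, ⟨(0, φ 0 - β), hDC ?_, rfl⟩⟩
    rw [hD]; exact ⟨0, by simpa using le_of_lt hr, rfl⟩
  have hSlb : ∀ t ∈ S, -β ≤ t := by
    rintro t ⟨p, hp, rfl⟩
    have h := (hCE hp).2
    have := (hpos p.1)
    linarith
  have hSbdd : BddBelow S := ⟨-β, hSlb⟩
  have hballne : (φ '' Metric.closedBall (0 : X) r).Nonempty :=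
    ⟨φ 0, 0, by simpa using le_of_lt hr, rfl⟩
  have hinf_le : sInf S ≤ -β := by
    refine le_of_forall_pos_le_add fun ε hε => ?_
    have h0 : sInf (φ '' Metric.closedBall (0 : X) r) < ε := by rw [hinf]; exact hε
    obtain ⟨t, ⟨x, hx, rfl⟩, ht⟩ := exists_lt_of_csInf_lt hballne h0
    have hmem : φ x - β ∈ S := ⟨(x, φ x - β), hDC (by rw [hD]; exact ⟨x, hx, rfl⟩), rfl⟩
    have := csInf_le hSbdd hmem
    linarith
  constructor
  · exact le_antisymm hinf_le (le_csInf hSne hSlb)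
  · rintro ⟨z, hz, hz2⟩
    have h := (hCE hz).2
    have := hpos z.1
    linarith
end
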